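/- Let G be a group and H ≤ G a normal subgroup of finite index, and let Σ be a left system of equations on finitely generated subgroups H₁,…,Hₙ ≤ H with all constants in H. If Σ has a solution in G, then Σ has a solution in H. -/

import Mathlib

/-- An equation of a left system on subgroups `H₁,…,Hₙ` (indexed by `Fin n`), with
variables `x₁,…,xₘ` (indexed by `Fin m`): either `x_i H_j = g H_j` or
`x_i H_j = x_r g H_j`. -/
inductive LeftEq (G : Type) [Group G] (m n : ℕ) where
  | const (i : Fin m) (j : Fin n) (g : G) : LeftEq G m n
  | var (i r : Fin m) (j : Fin n) (g : G) : LeftEq G m n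

/-- The constant appearing in an equation. -/
def LeftEq.constant {G : Type} [Group G] {m n : ℕ} : LeftEq G m n → G
  | .const _ _ g => g
  | .var _ _ _ g => g

/-- An assignment `v` of group elements to the variables satisfies an equation
(equality of left cosets `xH = yH` being `x⁻¹ y ∈ H`). -/
def LeftEq.Sat {G : Type} [Group G] {m n : ℕ} (Hs : Fin n → Subgroup G)
    (v : Fin m → G) : LeftEq G m n → Prop
  | .const i j g => (v i)⁻¹ * g ∈ Hs j
  | .var i r j g => (v i)⁻¹ * (v r * g) ∈ Hs j

/-- If `H ⊴ G` has finite index, `Σ` is a left system of equations on finitely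
generated subgroups `H₁,…,Hₙ ≤ H` whose constants all lie in `H`, and `Σ` has a
solution in `G`, then `Σ` has a solution consisting of elements of `H`. -/
theorem stmt_3 (G : Type) [Group G] (H : Subgroup G) [H.Normal]
    (hindex : H.index ≠ 0)
    (m n : ℕ) (Hs : Fin n → Subgroup G)
    (hle : ∀ j, Hs j ≤ H) (hfg : ∀ j, (Hs j).FG)
    (S : Finset (LeftEq G m n)) (hconst : ∀ e ∈ S, e.constant ∈ H)
    (hsol : ∃ v : Fin m → G, ∀ e ∈ S, LeftEq.Sat Hs v e) :
    ∃ v : Fin m → G, (∀ i, v i ∈ H) ∧ ∀ e ∈ S, LeftEq.Sat Hs v e := by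
  classical
  obtain ⟨v, hv⟩ := hsol
  -- a section of the quotient map sending the trivial coset to 1
  let f : G ⧸ H → G := fun q => if q = 1 then 1 else q.out
  have hf : ∀ q : G ⧸ H, (f q : G ⧸ H) = q := by
    intro q
    by_cases h : q = 1
    · simp [f, h]
    · simp [f, h]
  refine ⟨fun i => (f (QuotientGroup.mk (v i)))⁻¹ * v i, ?_, ?_⟩
  · intro i
    have : ((((f (QuotientGroup.mk (v i)))⁻¹ * v i : G)) : G ⧸ H) = 1 := by
      rw [QuotientGroup.mk_mul, QuotientGroup.mk_inv, hf, inv_mul_cancel]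
    rwa [QuotientGroup.eq_one_iff] at this
  · intro e he
    have hce := hconst e he
    have hse := hv e he
    cases e with
    | const i j g =>
        have hmem : (v i)⁻¹ * g ∈ H := hle j hse
        have hvi : v i ∈ H := by
          have : v i = g * ((v i)⁻¹ * g)⁻¹ := by group
          rw [this]
          exact H.mul_mem hce (H.inv_mem hmem)
        have h1 : (QuotientGroup.mk (v i) : G ⧸ H) = 1 :=
          (QuotientGroup.eq_one_iff _).2 hvi
        show ((f (QuotientGroup.mk (v i)))⁻¹ * v i)⁻¹ * g ∈ Hs j
        rw [h1]
        simpa [f, LeftEq.Sat] using hse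
    | var i r j g =>
        have hmem : (v i)⁻¹ * (v r * g) ∈ H := hle j hse
        have heq : (QuotientGroup.mk (v i) : G ⧸ H) = QuotientGroup.mk (v r) := by
          have h1 : (QuotientGroup.mk (v i) : G ⧸ H) = QuotientGroup.mk (v r * g) :=
            QuotientGroup.eq.2 hmem
          have h2 : (QuotientGroup.mk (v r * g) : G ⧸ H) = QuotientGroup.mk (v r) := by
            rw [QuotientGroup.mk_mul, (QuotientGroup.eq_one_iff g).2 hce, mul_one]
          rw [h1, h2]
        show ((f (QuotientGroup.mk (v i)))⁻¹ * v i)⁻¹ *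
            ((f (QuotientGroup.mk (v r)))⁻¹ * v r * g) ∈ Hs j
        rw [heq]
        have : ((f (QuotientGroup.mk (v r)))⁻¹ * v i)⁻¹ *
            ((f (QuotientGroup.mk (v r)))⁻¹ * v r * g) = (v i)⁻¹ * (v r * g) := by
          group
        rw [this]
        exact hse
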